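/- The mean outcome under the optimal treatment regime is identified by the AIPW score with the true nuisances and the threshold rule: E[ψ(d₀, π₁, (μ₁,μ₀))] = V₀, where d₀(x)=1{τ(x)>0}. -/

import Mathlib

open MeasureTheory ProbabilityTheory Filter Topology
open scoped Classical

/-- AIPW score `ψ(D, p, (m₁, m₀))` evaluated at a sample point `ω`. -/
noncomputable def aipw {Ω 𝒳 : Type*} (X : Ω → 𝒳) (A Y : Ω → ℝ)
    (D p m₁ m₀ : 𝒳 → ℝ) (ω : Ω) : ℝ :=
  (A ω * D (X ω) + (1 - A ω) * (1 - D (X ω))) /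
      (A ω * p (X ω) + (1 - A ω) * (1 - p (X ω))) *
    (Y ω - (A ω * m₁ (X ω) + (1 - A ω) * m₀ (X ω)))
  + D (X ω) * m₁ (X ω) + (1 - D (X ω)) * m₀ (X ω)

/-- The mean outcome under the optimal treatment regime is identified by the
AIPW score with the true nuisances and the threshold rule:
`E[ψ(d₀, π₁, (μ₁, μ₀))] = V₀ = E[max(μ₁(X), μ₀(X))]`, where `d₀(x) = 1{τ(x) > 0}` and
`τ = μ₁ − μ₀`. -/
theorem stmt_5 {Ω 𝒳 : Type*} [MeasurableSpace Ω] [MeasurableSpace 𝒳]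
    (P : Measure Ω) [IsProbabilityMeasure P]
    (X : Ω → 𝒳) (A Y : Ω → ℝ)
    (hX : Measurable X) (hA : Measurable A) (hY : Measurable Y)
    (hAbin : ∀ ω, A ω = 0 ∨ A ω = 1) (hYL2 : MemLp Y 2 P)
    (c : ℝ) (hc : c ∈ Set.Ioo (0 : ℝ) (1 / 2))
    (π₁ : 𝒳 → ℝ) (hπ₁m : Measurable π₁) (hπ₁r : ∀ x, π₁ x ∈ Set.Icc c (1 - c))
    (hcondA : P[A | MeasurableSpace.comap X inferInstance]
      =ᵐ[P] fun ω => π₁ (X ω))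
    (μ₁ μ₀ : 𝒳 → ℝ) (hμ₁m : Measurable μ₁) (hμ₀m : Measurable μ₀)
    (hμ₁L2 : MemLp (fun ω => μ₁ (X ω)) 2 P) (hμ₀L2 : MemLp (fun ω => μ₀ (X ω)) 2 P)
    (hcond1 : P[fun ω => A ω * Y ω | MeasurableSpace.comap X inferInstance]
      =ᵐ[P] fun ω => μ₁ (X ω) * π₁ (X ω))
    (hcond0 : P[fun ω => (1 - A ω) * Y ω | MeasurableSpace.comap X inferInstance]
      =ᵐ[P] fun ω => μ₀ (X ω) * (1 - π₁ (X ω)))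
    (d₀ : 𝒳 → ℝ) (hd₀ : ∀ x, d₀ x = if 0 < μ₁ x - μ₀ x then 1 else 0) :
    ∫ ω, aipw X A Y d₀ π₁ μ₁ μ₀ ω ∂P = ∫ ω, max (μ₁ (X ω)) (μ₀ (X ω)) ∂P := by
  obtain ⟨hc0, hc2⟩ := hc
  have hm : MeasurableSpace.comap X inferInstance ≤ _ := hX.comap_le
  set m : MeasurableSpace Ω := MeasurableSpace.comap X inferInstance with hm_def
  have hπpos : ∀ x, 0 < π₁ x := fun x => lt_of_lt_of_le hc0 (hπ₁r x).1
  have hπlt1 : ∀ x, π₁ x < 1 := fun x => lt_of_le_of_lt (hπ₁r x).2 (by linarith)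
  have hd₀m : Measurable d₀ := by
    have : d₀ = fun x => if 0 < μ₁ x - μ₀ x then (1 : ℝ) else 0 := funext hd₀
    rw [this]
    exact Measurable.ite (measurableSet_lt measurable_const (hμ₁m.sub hμ₀m))
      measurable_const measurable_const
  have hd₀r : ∀ x, d₀ x = 0 ∨ d₀ x = 1 := by
    intro x; rw [hd₀]; split_ifs <;> simp
  -- composed strong measurability w.r.t. m
  have hcomp : ∀ (f : 𝒳 → ℝ), Measurable f → StronglyMeasurable[m] (fun ω => f (X ω)) := by
    intro f hf
    exact (hf.comp (comap_measurable X)).stronglyMeasurable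
  -- basic integrabilities
  have hYint : Integrable Y P := hYL2.integrable one_le_two
  have hμ₁int : Integrable (fun ω => μ₁ (X ω)) P := hμ₁L2.integrable one_le_two
  have hμ₀int : Integrable (fun ω => μ₀ (X ω)) P := hμ₀L2.integrable one_le_two
  have hAbdd : ∀ ω, ‖A ω‖ ≤ 1 := by
    intro ω; rcases hAbin ω with h | h <;> simp [h]
  have h1Abdd : ∀ ω, ‖1 - A ω‖ ≤ 1 := by
    intro ω; rcases hAbin ω with h | h <;> simp [h]
  have hAint : Integrable A P := by
    have h : MemLp A ⊤ P :=
      memLp_top_of_bound hA.aestronglyMeasurable 1 (Filter.Eventually.of_forall hAbdd)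
    exact h.integrable le_top
  have h1Aint : Integrable (fun ω => 1 - A ω) P := (integrable_const 1).sub hAint
  have hAY : Integrable (fun ω => A ω * Y ω) P :=
    hYint.bdd_mul hA.aestronglyMeasurable (Filter.Eventually.of_forall hAbdd)
  have h1AY : Integrable (fun ω => (1 - A ω) * Y ω) P :=
    hYint.bdd_mul (hA.const_sub 1).aestronglyMeasurable (Filter.Eventually.of_forall h1Abdd)
  -- the centered scores
  set f₁ : Ω → ℝ := fun ω => A ω * (Y ω - μ₁ (X ω)) with hf₁def
  set f₀ : Ω → ℝ := fun ω => (1 - A ω) * (Y ω - μ₀ (X ω)) with hf₀def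
  set g₁ : Ω → ℝ := fun ω => d₀ (X ω) / π₁ (X ω) with hg₁def
  set g₀ : Ω → ℝ := fun ω => (1 - d₀ (X ω)) / (1 - π₁ (X ω)) with hg₀def
  have hf₁int : Integrable f₁ P :=
    (hYint.sub hμ₁int).bdd_mul hA.aestronglyMeasurable (Filter.Eventually.of_forall hAbdd)
  have hf₀int : Integrable f₀ P :=
    (hYint.sub hμ₀int).bdd_mul (hA.const_sub 1).aestronglyMeasurable (Filter.Eventually.of_forall h1Abdd)
  have hg₁sm : StronglyMeasurable[m] g₁ := hcomp _ (hd₀m.div hπ₁m)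
  have hg₀sm : StronglyMeasurable[m] g₀ :=
    hcomp _ ((measurable_const.sub hd₀m).div (measurable_const.sub hπ₁m))
  have hg₁bdd : ∀ ω, ‖g₁ ω‖ ≤ 1 / c := by
    intro ω
    have h1 := hπpos (X ω)
    have h2 := (hπ₁r (X ω)).1
    simp only [hg₁def, Real.norm_eq_abs]
    rcases hd₀r (X ω) with h | h
    · rw [h, zero_div, abs_zero]; positivity
    · rw [h, abs_of_pos (by positivity)]
      exact one_div_le_one_div_of_le hc0 h2
  have hg₀bdd : ∀ ω, ‖g₀ ω‖ ≤ 1 / c := by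
    intro ω
    have h1 : 0 < 1 - π₁ (X ω) := by have := hπlt1 (X ω); linarith
    have h2 : c ≤ 1 - π₁ (X ω) := by have := (hπ₁r (X ω)).2; linarith
    simp only [hg₀def, Real.norm_eq_abs]
    rcases hd₀r (X ω) with h | h
    · rw [h, sub_zero, abs_of_pos (by positivity)]
      exact one_div_le_one_div_of_le hc0 h2
    · rw [h, sub_self, zero_div, abs_zero]; positivity
  have hg₁f₁int : Integrable (g₁ * f₁) P :=
    hf₁int.bdd_mul (hg₁sm.mono hm).aestronglyMeasurable (Filter.Eventually.of_forall hg₁bdd)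
  have hg₀f₀int : Integrable (g₀ * f₀) P :=
    hf₀int.bdd_mul (hg₀sm.mono hm).aestronglyMeasurable (Filter.Eventually.of_forall hg₀bdd)
  -- E[f₁ | m] = 0
  have hμ₁A : Integrable ((fun ω => μ₁ (X ω)) * A) P := by
    have := hμ₁int.mul_bdd hA.aestronglyMeasurable (Filter.Eventually.of_forall hAbdd)
    exact this
  have hμ₀1A : Integrable ((fun ω => μ₀ (X ω)) * (fun ω => 1 - A ω)) P := by
    have := hμ₀int.mul_bdd (hA.const_sub 1).aestronglyMeasurable (Filter.Eventually.of_forall h1Abdd)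
    exact this
  have hpull1 : P[(fun ω => μ₁ (X ω)) * A | m]
      =ᵐ[P] (fun ω => μ₁ (X ω)) * P[A | m] :=
    condExp_mul_of_stronglyMeasurable_left (hcomp μ₁ hμ₁m) hμ₁A hAint
  have hpull0 : P[(fun ω => μ₀ (X ω)) * (fun ω => 1 - A ω) | m]
      =ᵐ[P] (fun ω => μ₀ (X ω)) * P[(fun ω => 1 - A ω) | m] :=
    condExp_mul_of_stronglyMeasurable_left (hcomp μ₀ hμ₀m) hμ₀1A h1Aint
  have hcond1A : P[(fun ω => 1 - A ω) | m] =ᵐ[P] fun ω => 1 - π₁ (X ω) := by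
    have hsub := condExp_sub (μ := P) (m := m) (integrable_const (1 : ℝ)) hAint
    have hc1 : P[(fun _ => (1 : ℝ)) | m] =ᵐ[P] fun _ => (1 : ℝ) := by
      rw [condExp_const hm]
    filter_upwards [hsub, hc1.sub hcondA] with ω h1 h2
    exact h1.trans h2
  have hE1 : P[f₁ | m] =ᵐ[P] 0 := by
    have heq : f₁ = (fun ω => A ω * Y ω) - ((fun ω => μ₁ (X ω)) * A) := by
      funext ω; simp [hf₁def]; ring
    rw [heq]
    have hsub := condExp_sub (μ := P) (m := m) hAY hμ₁A
    filter_upwards [hsub, hcond1, hpull1, hcondA] with ω h1 h2 h3 h4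
    simp only [Pi.sub_apply, Pi.mul_apply, Pi.zero_apply] at *
    rw [h1, h2, h3, h4]; ring
  have hE0 : P[f₀ | m] =ᵐ[P] 0 := by
    have heq : f₀ = (fun ω => (1 - A ω) * Y ω)
        - ((fun ω => μ₀ (X ω)) * (fun ω => 1 - A ω)) := by
      funext ω; simp [hf₀def]; ring
    rw [heq]
    have hsub := condExp_sub (μ := P) (m := m) h1AY hμ₀1A
    filter_upwards [hsub, hcond0, hpull0, hcond1A] with ω h1 h2 h3 h4
    simp only [Pi.sub_apply, Pi.mul_apply, Pi.zero_apply] at *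
    rw [h1, h2, h3, h4]; ring
  -- integrals of the centered terms vanish
  have hI1 : ∫ ω, (g₁ * f₁) ω ∂P = 0 := by
    have hpull := condExp_mul_of_stronglyMeasurable_left hg₁sm hg₁f₁int hf₁int
    have hzero : P[g₁ * f₁ | m] =ᵐ[P] 0 := by
      filter_upwards [hpull, hE1] with ω h1 h2
      simp only [Pi.mul_apply, Pi.zero_apply] at *
      rw [h1, h2, mul_zero]
    calc ∫ ω, (g₁ * f₁) ω ∂P = ∫ ω, (P[g₁ * f₁ | m]) ω ∂P :=
          (integral_condExp hm).symm
      _ = 0 := by rw [integral_congr_ae hzero]; simp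
  have hI0 : ∫ ω, (g₀ * f₀) ω ∂P = 0 := by
    have hpull := condExp_mul_of_stronglyMeasurable_left hg₀sm hg₀f₀int hf₀int
    have hzero : P[g₀ * f₀ | m] =ᵐ[P] 0 := by
      filter_upwards [hpull, hE0] with ω h1 h2
      simp only [Pi.mul_apply, Pi.zero_apply] at *
      rw [h1, h2, mul_zero]
    calc ∫ ω, (g₀ * f₀) ω ∂P = ∫ ω, (P[g₀ * f₀ | m]) ω ∂P :=
          (integral_condExp hm).symm
      _ = 0 := by rw [integral_congr_ae hzero]; simp
  -- pointwise decomposition of the AIPW score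
  have hplug : ∀ x, d₀ x * μ₁ x + (1 - d₀ x) * μ₀ x = max (μ₁ x) (μ₀ x) := by
    intro x
    rw [hd₀]
    split_ifs with h
    · rw [max_eq_left (by linarith)]; ring
    · rw [max_eq_right (by linarith)]; ring
  have hpt : ∀ ω, aipw X A Y d₀ π₁ μ₁ μ₀ ω
      = (g₁ * f₁) ω + (g₀ * f₀) ω + max (μ₁ (X ω)) (μ₀ (X ω)) := by
    intro ω
    have hπ0 : π₁ (X ω) ≠ 0 := ne_of_gt (hπpos (X ω))
    have hπ1 : 1 - π₁ (X ω) ≠ 0 := by have := hπlt1 (X ω); intro h; linarith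
    rw [← hplug (X ω)]
    rcases hAbin ω with h | h <;>
      simp only [aipw, Pi.mul_apply, hg₁def, hg₀def, hf₁def, hf₀def, h] <;>
      ring
  -- conclude
  have hmax : Integrable (fun ω => max (μ₁ (X ω)) (μ₀ (X ω))) P := hμ₁int.sup hμ₀int
  calc ∫ ω, aipw X A Y d₀ π₁ μ₁ μ₀ ω ∂P
      = ∫ ω, ((g₁ * f₁) ω + (g₀ * f₀) ω + max (μ₁ (X ω)) (μ₀ (X ω))) ∂P := by
        exact integral_congr_ae (Filter.Eventually.of_forall hpt)
    _ = (∫ ω, ((g₁ * f₁) ω + (g₀ * f₀) ω) ∂P)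
          + ∫ ω, max (μ₁ (X ω)) (μ₀ (X ω)) ∂P :=
        integral_add (hg₁f₁int.add hg₀f₀int) hmax
    _ = (∫ ω, (g₁ * f₁) ω ∂P) + (∫ ω, (g₀ * f₀) ω ∂P)
          + ∫ ω, max (μ₁ (X ω)) (μ₀ (X ω)) ∂P := by
        rw [integral_add hg₁f₁int hg₀f₀int]
    _ = ∫ ω, max (μ₁ (X ω)) (μ₀ (X ω)) ∂P := by rw [hI1, hI0]; ring
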